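/- Fix 0 < r < 1 and δ ∈ (0,1). For every x ∈ S_δ, r + (1−r)δ√(rδ)/(1+√r)² ≤ p̄(x) ≤ 1 − (1−√r)δ/(1+√r). -/

import Mathlib

noncomputable section

/-- The minimizing parameter `p̄(x₁,x₂)`. -/
def pbar (r a b : ℝ) : ℝ :=
  (r * (a + b) + (r + 1) * Real.sqrt (r * a * b)) /
    (a + r * b + 2 * Real.sqrt (r * a * b))

/-- The cone `S_δ = {x ∈ ℝ²_{>0} : x₁ ≥ δx₂, x₂ ≥ δx₁}`. -/
def Scone (δ : ℝ) : Set (ℝ × ℝ) :=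
  {x | 0 < x.1 ∧ 0 < x.2 ∧ δ * x.2 ≤ x.1 ∧ δ * x.1 ≤ x.2}

set_option maxHeartbeats 1600000 in
/-- **Bounds on `p̄` on the cone `S_δ`.** For `0 < r < 1`, `δ ∈ (0,1)`, and `x ∈ S_δ`,
`r + (1−r)δ√(rδ)/(1+√r)² ≤ p̄(x) ≤ 1 − (1−√r)δ/(1+√r)`. -/
theorem pbar_bounds (r δ : ℝ) (hr0 : 0 < r) (hr1 : r < 1)
    (hδ0 : 0 < δ) (hδ1 : δ < 1)
    (x : ℝ × ℝ) (hx : x ∈ Scone δ) :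
    r + (1 - r) * δ * Real.sqrt (r * δ) / (1 + Real.sqrt r) ^ 2 ≤ pbar r x.1 x.2 ∧
      pbar r x.1 x.2 ≤ 1 - (1 - Real.sqrt r) * δ / (1 + Real.sqrt r) := by
  obtain ⟨ha, hb, hba, hab⟩ := hx
  set s := Real.sqrt r with hs
  set d := Real.sqrt δ with hd
  set u := Real.sqrt x.1 with hu
  set v := Real.sqrt x.2 with hv
  have hs0 : 0 < s := Real.sqrt_pos.mpr hr0
  have hs1 : s < 1 := by
    rw [hs, show (1:ℝ) = Real.sqrt 1 by simp]
    exact Real.sqrt_lt_sqrt hr0.le hr1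
  have hd0 : 0 < d := Real.sqrt_pos.mpr hδ0
  have hd1 : d < 1 := by
    rw [hd, show (1:ℝ) = Real.sqrt 1 by simp]
    exact Real.sqrt_lt_sqrt hδ0.le hδ1
  have hu0 : 0 < u := Real.sqrt_pos.mpr ha
  have hv0 : 0 < v := Real.sqrt_pos.mpr hb
  have hr' : s ^ 2 = r := Real.sq_sqrt hr0.le
  have hδ' : d ^ 2 = δ := Real.sq_sqrt hδ0.le
  have ha' : u ^ 2 = x.1 := Real.sq_sqrt ha.le
  have hb' : v ^ 2 = x.2 := Real.sq_sqrt hb.le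
  -- constraints
  have hdv : d * v ≤ u := by
    rw [hd, hv, hu, ← Real.sqrt_mul hδ0.le]
    exact Real.sqrt_le_sqrt hba
  have hdu : d * u ≤ v := by
    rw [hd, hu, hv, ← Real.sqrt_mul hδ0.le]
    exact Real.sqrt_le_sqrt hab
  -- sqrt simplifications
  have hsq1 : Real.sqrt (r * x.1 * x.2) = s * u * v := by
    rw [show r * x.1 * x.2 = (s * u * v) ^ 2 by rw [← hr', ← ha', ← hb']; ring]
    exact Real.sqrt_sq (by positivity)
  have hsq2 : Real.sqrt (r * δ) = s * d := by
    rw [show r * δ = (s * d) ^ 2 by rw [← hr', ← hδ']; ring]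
    exact Real.sqrt_sq (by positivity)
  have hden : (0:ℝ) < u + s * v := by positivity
  have hpbar : pbar r x.1 x.2 = s * (s * u + v) / (u + s * v) := by
    unfold pbar
    rw [hsq1, ← hr', ← ha', ← hb']
    rw [show s ^ 2 * (u ^ 2 + v ^ 2) + (s ^ 2 + 1) * (s * u * v)
        = (s * (s * u + v)) * (u + s * v) by ring,
      show u ^ 2 + s ^ 2 * v ^ 2 + 2 * (s * u * v) = (u + s * v) * (u + s * v) by ring,
      ← div_div, mul_div_assoc, div_self hden.ne', mul_one]
  clear_value s d u v
  rw [hpbar, hsq2, ← hr', ← hδ']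
  have hs1' : (0:ℝ) < 1 + s := by positivity
  have key1 : d ^ 3 * u ≤ v := by nlinarith [mul_le_mul_of_nonneg_left hdu (by positivity : (0:ℝ) ≤ d ^ 2)]
  have hd3 : d ^ 3 ≤ 1 := by nlinarith
  have bnd1 : d ^ 3 * (u + s * v) ≤ v * (1 + s) ^ 2 := by
    nlinarith [key1, mul_le_mul_of_nonneg_right hd3 (mul_nonneg hs0.le hv0.le),
      mul_nonneg hs0.le hv0.le, mul_nonneg (mul_nonneg hs0.le hs0.le) hv0.le]
  have key2 : d ^ 2 * (u + s * v) ≤ u * (1 + s) ^ 2 := by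
    nlinarith [mul_le_mul_of_nonneg_left hdv (mul_nonneg hs0.le hd0.le),
      mul_nonneg hs0.le hu0.le, mul_nonneg (mul_nonneg hs0.le hs0.le) hu0.le]
  have h1s2 : (0:ℝ) ≤ 1 - s ^ 2 := by nlinarith
  constructor
  · rw [add_div' _ _ _ (by positivity : ((1:ℝ) + s) ^ 2 ≠ 0),
      div_le_div_iff₀ (by positivity) hden]
    have e1 : s * (s * u + v) * (1 + s) ^ 2
        - (s ^ 2 * (1 + s) ^ 2 + (1 - s ^ 2) * d ^ 2 * (s * d)) * (u + s * v)
        = (s * (1 - s ^ 2)) * (v * (1 + s) ^ 2 - d ^ 3 * (u + s * v)) := by ring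
    linarith [mul_nonneg (mul_nonneg hs0.le h1s2) (sub_nonneg.mpr bnd1), e1]
  · rw [sub_div' hs1'.ne', div_le_div_iff₀ hden hs1']
    have e2 : (1 * (1 + s) - (1 - s) * d ^ 2) * (u + s * v)
        - s * (s * u + v) * (1 + s)
        = (1 - s) * (u * (1 + s) ^ 2 - d ^ 2 * (u + s * v)) := by ring
    linarith [mul_nonneg (by linarith : (0:ℝ) ≤ 1 - s) (sub_nonneg.mpr key2), e2]

end
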